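/- Fix an integer d ≥ 3. There exist constants c, C > 0 depending only on d such that for all integers ℓ ≥ 1, all z ∈ ℂ with Im z > 0, and all Δ ∈ ℂ with Im Δ > 0 satisfying ℓ²·|Δ − m_sc(z)| ≤ c, one has | Y_ℓ(Δ,z) − m_sc(z) − m_sc(z)^{2ℓ+2}·(Δ − m_sc(z)) − m_sc(z)^{2ℓ+2}·m_d(z)·( (1 − m_sc(z)^{2ℓ+2})/(d−1) + ((d−2)/(d−1))·(1 − m_sc(z)^{2ℓ+2})/(1 − m_sc(z)²) )·(Δ − m_sc(z))² | ≤ C·ℓ⁵·|Δ − m_sc(z)|³, where Y_ℓ(Δ,z) := ((H_{𝒴_ℓ} − z·I − Δ·𝕀∂)⁻¹)_{oo}. -/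

import Mathlib

open scoped Classical

noncomputable section

/-- Vertices of the ball of radius `ℓ` in the infinite `m`-ary rooted tree:
words over `Fin m` of length at most `ℓ`. -/
def TreeBallY (m ℓ : ℕ) : Type := {l : List (Fin m) // l.length ≤ ℓ}

instance (m ℓ : ℕ) : DecidableEq (TreeBallY m ℓ) :=
  inferInstanceAs (DecidableEq {l : List (Fin m) // l.length ≤ ℓ})

instance (m ℓ : ℕ) : Fintype (TreeBallY m ℓ) :=
  Fintype.ofSurjective
    (fun p : (Σ k : Fin (ℓ + 1), List.Vector (Fin m) k) =>
      (⟨p.2.toList, by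
        have h1 : p.2.toList.length = (p.1 : ℕ) := p.2.toList_length
        have h2 := p.1.isLt
        omega⟩ : TreeBallY m ℓ))
    (fun l => ⟨⟨⟨l.1.length, Nat.lt_succ_of_le l.2⟩, ⟨l.1, rfl⟩⟩, rfl⟩)

/-- The tree structure on the ball of radius `ℓ` of the `m`-ary rooted tree:
`x` is adjacent to `y` iff one of them is obtained from the other by appending one letter
(i.e. one is the parent of the other). -/
def treeGraphY (m ℓ : ℕ) : SimpleGraph (TreeBallY m ℓ) :=
  SimpleGraph.fromRel (fun x y => ∃ a : Fin m, y.1 = x.1 ++ [a])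

/-- The root of the tree: the empty word. -/
def rootY (m ℓ : ℕ) : TreeBallY m ℓ := ⟨[], Nat.zero_le _⟩

/-- The normalized adjacency matrix `A/√(d-1)` of the ball `𝒴_ℓ` of radius `ℓ` in the
infinite `(d-1)`-ary tree. -/
def HmatY (d ℓ : ℕ) : Matrix (TreeBallY (d - 1) ℓ) (TreeBallY (d - 1) ℓ) ℂ :=
  fun x y => if (treeGraphY (d - 1) ℓ).Adj x y then (Real.sqrt ((d : ℝ) - 1) : ℂ)⁻¹ else 0

/-- The leaf indicator `𝕀∂` of `𝒴_ℓ`: the diagonal 0-1 matrix whose entry at `x` is `1`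
exactly when `dist(x, o) = ℓ`. -/
def IbdY (d ℓ : ℕ) : Matrix (TreeBallY (d - 1) ℓ) (TreeBallY (d - 1) ℓ) ℂ :=
  Matrix.diagonal (fun x => if (treeGraphY (d - 1) ℓ).dist (rootY (d - 1) ℓ) x = ℓ then 1 else 0)

/-- Vertices of the ball `𝒳_ℓ` of radius `ℓ` in the infinite `d`-regular tree: the root
(`none`), or a first step in `Fin d` followed by a word over `Fin (d-1)` of length at most
`ℓ - 1`. -/
def TreeBallX (d ℓ : ℕ) : Type := Option (Fin d × TreeBallY (d - 1) (ℓ - 1))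

instance (d ℓ : ℕ) : DecidableEq (TreeBallX d ℓ) :=
  inferInstanceAs (DecidableEq (Option (Fin d × TreeBallY (d - 1) (ℓ - 1))))

instance (d ℓ : ℕ) : Fintype (TreeBallX d ℓ) :=
  inferInstanceAs (Fintype (Option (Fin d × TreeBallY (d - 1) (ℓ - 1))))

/-- The tree structure on the ball `𝒳_ℓ` of radius `ℓ` of the `d`-regular tree: the root is
adjacent to the `d` one-step vertices, and within each branch two vertices are adjacent iff one
is the parent of the other. -/
def treeGraphX (d ℓ : ℕ) : SimpleGraph (TreeBallX d ℓ) :=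
  SimpleGraph.fromRel (fun x y =>
    (∃ a : Fin d, x = none ∧ y = some (a, ⟨[], Nat.zero_le _⟩)) ∨
    (∃ (a : Fin d) (s t : TreeBallY (d - 1) (ℓ - 1)),
      x = some (a, s) ∧ y = some (a, t) ∧ ∃ b : Fin (d - 1), t.1 = s.1 ++ [b]))

/-- The root of the `d`-regular tree ball `𝒳_ℓ`. -/
def rootX (d ℓ : ℕ) : TreeBallX d ℓ := none

/-- The normalized adjacency matrix `A/√(d-1)` of the ball `𝒳_ℓ` of radius `ℓ` in the
infinite `d`-regular tree. -/
def HmatX (d ℓ : ℕ) : Matrix (TreeBallX d ℓ) (TreeBallX d ℓ) ℂ :=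
  fun x y => if (treeGraphX d ℓ).Adj x y then (Real.sqrt ((d : ℝ) - 1) : ℂ)⁻¹ else 0

/-- The leaf indicator `𝕀∂` of `𝒳_ℓ`. -/
def IbdX (d ℓ : ℕ) : Matrix (TreeBallX d ℓ) (TreeBallX d ℓ) ℂ :=
  Matrix.diagonal (fun x => if (treeGraphX d ℓ).dist (rootX d ℓ) x = ℓ then 1 else 0)

/-- Longest common prefix of two words. -/
def lcp {m : ℕ} : List (Fin m) → List (Fin m) → List (Fin m)
  | [], _ => []
  | _ :: _, [] => []
  | a :: s, b :: t => if a = b then a :: lcp s t else []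

theorem lcp_length_le_left {m : ℕ} : ∀ s t : List (Fin m), (lcp s t).length ≤ s.length
  | [], _ => by simp [lcp]
  | _ :: _, [] => by simp [lcp]
  | a :: s, b :: t => by
    by_cases h : a = b
    · simp only [lcp, if_pos h, List.length_cons]
      exact Nat.succ_le_succ (lcp_length_le_left s t)
    · simp [lcp, h]

/-- The least common ancestor of two vertices of `𝒴_ℓ`: their longest common prefix. -/
def lcaY {m ℓ : ℕ} (x y : TreeBallY m ℓ) : TreeBallY m ℓ :=
  ⟨lcp x.1 y.1, le_trans (lcp_length_le_left _ _) x.2⟩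

/-- `anc(x,y)`: the distance from the least common ancestor of `x` and `y` to the root `o`. -/
def ancY {m ℓ : ℕ} (x y : TreeBallY m ℓ) : ℕ :=
  (treeGraphY m ℓ).dist (rootY m ℓ) (lcaY x y)

end


section Aux

lemma adjY {m ℓ : ℕ} {x y : TreeBallY m ℓ} :
    (treeGraphY m ℓ).Adj x y ↔
      (∃ a : Fin m, y.1 = x.1 ++ [a]) ∨ (∃ a : Fin m, x.1 = y.1 ++ [a]) := by
  constructor
  · rintro ⟨hne, h | h⟩
    · exact Or.inl h
    · exact Or.inr h
  · rintro (⟨a, ha⟩ | ⟨a, ha⟩)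
    · refine ⟨fun h => ?_, Or.inl ⟨a, ha⟩⟩
      rw [h] at ha
      exact absurd (congrArg List.length ha) (by simp)
    · refine ⟨fun h => ?_, Or.inr ⟨a, ha⟩⟩
      rw [h] at ha
      exact absurd (congrArg List.length ha) (by simp)

lemma length_le_of_adj {m ℓ : ℕ} {x y : TreeBallY m ℓ}
    (h : (treeGraphY m ℓ).Adj x y) : y.1.length ≤ x.1.length + 1 := by
  rcases adjY.mp h with ⟨a, ha⟩ | ⟨a, ha⟩
  · simp [ha]
  · have := congrArg List.length ha
    simp at this; omega

lemma exists_walk {m ℓ : ℕ} :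
    ∀ (l : List (Fin m)) (hl : l.length ≤ ℓ),
      ∃ p : (treeGraphY m ℓ).Walk (rootY m ℓ) ⟨l, hl⟩, p.length = l.length := by
  intro l
  induction l using List.reverseRecOn with
  | nil => intro hl; exact ⟨SimpleGraph.Walk.nil.copy rfl (Subtype.ext rfl), rfl⟩
  | append_singleton s a ih =>
    intro hl
    have hs : s.length ≤ ℓ := by simp at hl; omega
    obtain ⟨p, hp⟩ := ih hs
    have hadj : (treeGraphY m ℓ).Adj ⟨s, hs⟩ ⟨s ++ [a], hl⟩ := adjY.mpr (Or.inl ⟨a, rfl⟩)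
    exact ⟨p.concat hadj, (SimpleGraph.Walk.length_concat p hadj).trans (by rw [hp]; simp)⟩

lemma length_le_walk {m ℓ : ℕ} {x y : TreeBallY m ℓ}
    (p : (treeGraphY m ℓ).Walk x y) : y.1.length ≤ x.1.length + p.length := by
  induction p with
  | nil => simp
  | cons h q ih =>
    have := length_le_of_adj h
    simp only [SimpleGraph.Walk.length_cons]
    omega

lemma distY {m ℓ : ℕ} (x : TreeBallY m ℓ) :
    (treeGraphY m ℓ).dist (rootY m ℓ) x = x.1.length := by
  obtain ⟨p, hp⟩ := exists_walk x.1 x.2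
  refine le_antisymm (le_trans (SimpleGraph.dist_le p) (le_of_eq hp)) ?_
  obtain ⟨q, hq⟩ := (SimpleGraph.Walk.reachable p).exists_walk_length_eq_dist
  have h2 := length_le_walk q
  have : (rootY m ℓ).1.length = 0 := rfl
  have hb : ((⟨x.1, x.2⟩ : TreeBallY m ℓ)).1.length = x.1.length := rfl
  have he : (treeGraphY m ℓ).dist (rootY m ℓ) ⟨x.1, x.2⟩ = (treeGraphY m ℓ).dist (rootY m ℓ) x := rfl
  omega


noncomputable def Gseq (z Δ : ℂ) : ℕ → ℂ
  | 0 => Δ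
  | k+1 => -(z + Gseq z Δ k)⁻¹

lemma Gseq_im_pos {z Δ : ℂ} (hz : 0 < z.im) (hΔ : 0 < Δ.im) :
    ∀ k, 0 < (Gseq z Δ k).im := by
  intro k
  induction k with
  | zero => exact hΔ
  | succ k ih =>
    have him : 0 < (z + Gseq z Δ k).im := by
      simp only [Complex.add_im]; linarith
    have hne : z + Gseq z Δ k ≠ 0 := fun h => by simp [h] at him
    have hsq : 0 < Complex.normSq (z + Gseq z Δ k) := Complex.normSq_pos.mpr hne
    show 0 < (-(z + Gseq z Δ k)⁻¹).im
    rw [Complex.neg_im, Complex.inv_im, neg_div, neg_neg]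
    positivity

lemma Gseq_add_ne {z Δ : ℂ} (hz : 0 < z.im) (hΔ : 0 < Δ.im) (k : ℕ) :
    z + Gseq z Δ k ≠ 0 := by
  have := Gseq_im_pos hz hΔ k
  intro h
  have : (z + Gseq z Δ k).im = 0 := by rw [h]; rfl
  simp only [Complex.add_im] at this
  have := Gseq_im_pos hz hΔ k
  linarith

lemma Gseq_ne_zero {z Δ : ℂ} (hz : 0 < z.im) (hΔ : 0 < Δ.im) (k : ℕ) :
    Gseq z Δ k ≠ 0 := by
  have := Gseq_im_pos hz hΔ k
  intro h; rw [h] at this; simp at this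

noncomputable def Pseq (d ℓ : ℕ) (z Δ : ℂ) : ℕ → ℂ
  | 0 => Gseq z Δ (ℓ+1)
  | k+1 => -(Real.sqrt ((d : ℝ) - 1) : ℂ)⁻¹ * Gseq z Δ (ℓ - k) * Pseq d ℓ z Δ k

section MulVec

variable (d ℓ : ℕ) (z Δ : ℂ)

lemma mulVec_eq (hd : 3 ≤ d) (hℓ : 1 ≤ ℓ) (hz : 0 < z.im) (hΔ : 0 < Δ.im) :
    (HmatY d ℓ - z • 1 - Δ • IbdY d ℓ).mulVec
        (fun x : TreeBallY (d-1) ℓ => Pseq d ℓ z Δ x.1.length)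
      = fun x => if x = rootY (d-1) ℓ then 1 else 0 := by
  set W : ℂ := (Real.sqrt ((d : ℝ) - 1) : ℂ)⁻¹ with hWdef
  have hd1 : ((d:ℂ) - 1) ≠ 0 := by
    have : (d:ℂ) ≠ 1 := by
      intro h
      have : d = 1 := by exact_mod_cast h
      omega
    intro h; apply this; linear_combination h
  have hW2 : ((d:ℂ) - 1) * W^2 = 1 := by
    have h0 : (0:ℝ) ≤ (d:ℝ) - 1 := by
      have : (3:ℝ) ≤ (d:ℝ) := by exact_mod_cast hd
      linarith
    have : (Real.sqrt ((d : ℝ) - 1) : ℂ)^2 = ((d:ℂ) - 1) := by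
      rw [← Complex.ofReal_pow, Real.sq_sqrt h0]
      push_cast; ring
    rw [hWdef, inv_pow, this]
    exact mul_inv_cancel₀ hd1
  funext x
  set v : TreeBallY (d-1) ℓ → ℂ := fun y => Pseq d ℓ z Δ y.1.length with hvdef
  have hk : x.1.length ≤ ℓ := x.2
  -- expand the matrix product
  rw [Matrix.sub_mulVec, Matrix.sub_mulVec, Matrix.smul_mulVec, Matrix.smul_mulVec,
    Matrix.one_mulVec]
  simp only [Pi.sub_apply, Pi.smul_apply, smul_eq_mul, IbdY, Matrix.mulVec_diagonal]
  -- the adjacency sum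
  have hsplit : ∀ y : TreeBallY (d-1) ℓ, HmatY d ℓ x y * v y =
      (if (∃ a : Fin (d-1), y.1 = x.1 ++ [a]) then W * v y else 0) +
      (if (∃ a : Fin (d-1), x.1 = y.1 ++ [a]) then W * v y else 0) := by
    intro y
    rw [HmatY, ite_mul, zero_mul]
    by_cases h1 : ∃ a : Fin (d-1), y.1 = x.1 ++ [a] <;>
      by_cases h2 : ∃ a : Fin (d-1), x.1 = y.1 ++ [a]
    · exfalso
      obtain ⟨a, ha⟩ := h1; obtain ⟨b, hb⟩ := h2
      have h1' := congrArg List.length ha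
      have h2' := congrArg List.length hb
      simp at h1' h2'; omega
    · rw [if_pos h1, if_neg h2, if_pos (adjY.mpr (Or.inl h1)), add_zero]
    · rw [if_neg h1, if_pos h2, if_pos (adjY.mpr (Or.inr h2)), zero_add]
    · rw [if_neg h1, if_neg h2, if_neg, add_zero]
      intro hadj
      rcases adjY.mp hadj with h | h
      exacts [h1 h, h2 h]
  have hC : ∑ y : TreeBallY (d-1) ℓ, (if (∃ a : Fin (d-1), y.1 = x.1 ++ [a]) then v y else 0)
      = if x.1.length < ℓ then ((d:ℂ)-1) * Pseq d ℓ z Δ (x.1.length + 1) else 0 := by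
    by_cases h : x.1.length < ℓ
    · rw [if_pos h]
      set c : Fin (d-1) → TreeBallY (d-1) ℓ := fun a =>
        ⟨x.1 ++ [a], by rw [List.length_append]; simpa using h⟩ with hcdef
      have hcinj : Function.Injective c := by
        intro a b hab
        have := congrArg (fun t : TreeBallY (d-1) ℓ => t.1) hab
        simpa [hcdef] using this
      rw [← Finset.sum_filter]
      have hfil : Finset.univ.filter (fun y : TreeBallY (d-1) ℓ => ∃ a : Fin (d-1), y.1 = x.1 ++ [a])
          = Finset.image c Finset.univ := by
        ext y
        simp only [Finset.mem_filter, Finset.mem_univ, true_and, Finset.mem_image]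
        constructor
        · rintro ⟨a, ha⟩; exact ⟨a, (Subtype.ext ha.symm : c a = y)⟩
        · rintro ⟨a, rfl⟩; exact ⟨a, rfl⟩
      rw [hfil, Finset.sum_image (fun a _ b _ hab => hcinj hab)]
      have hval : ∀ a : Fin (d-1), v (c a) = Pseq d ℓ z Δ (x.1.length + 1) := by
        intro a; simp [hvdef, hcdef]
      rw [Finset.sum_congr rfl (fun a _ => hval a), Finset.sum_const, Finset.card_univ,
        Fintype.card_fin, nsmul_eq_mul]
      congr 1
      push_cast [Nat.cast_sub (by omega : 1 ≤ d)]
      ring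
    · rw [if_neg h]
      apply Finset.sum_eq_zero
      intro y _
      rw [if_neg]
      rintro ⟨a, ha⟩
      have := congrArg List.length ha
      have hy := y.2
      simp at this; omega
  have hPa : ∑ y : TreeBallY (d-1) ℓ, (if (∃ a : Fin (d-1), x.1 = y.1 ++ [a]) then v y else 0)
      = if 0 < x.1.length then Pseq d ℓ z Δ (x.1.length - 1) else 0 := by
    by_cases h : 0 < x.1.length
    · rw [if_pos h]
      have hne : x.1 ≠ [] := by
        intro h'; rw [h'] at h; simp at h
      set p : TreeBallY (d-1) ℓ :=
        ⟨x.1.dropLast, le_trans (by rw [List.length_dropLast]; omega) x.2⟩ with hpdef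
      have hiff : ∀ y : TreeBallY (d-1) ℓ, (∃ a : Fin (d-1), x.1 = y.1 ++ [a]) ↔ y = p := by
        intro y
        constructor
        · rintro ⟨a, ha⟩
          apply Subtype.ext
          rw [hpdef]
          simp only []
          rw [ha, List.dropLast_concat]
        · rintro rfl
          exact ⟨x.1.getLast hne, (List.dropLast_append_getLast hne).symm⟩
      calc ∑ y : TreeBallY (d-1) ℓ, (if (∃ a : Fin (d-1), x.1 = y.1 ++ [a]) then v y else 0)
          = ∑ y : TreeBallY (d-1) ℓ, (if y = p then v y else 0) := by
            apply Finset.sum_congr rfl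
            intro y _
            rw [if_congr (hiff y) rfl rfl]
        _ = v p := by rw [Finset.sum_ite_eq' Finset.univ p v, if_pos (Finset.mem_univ p)]
        _ = Pseq d ℓ z Δ (x.1.length - 1) := by
            rw [hvdef]
            simp only [hpdef, List.length_dropLast]
    · rw [if_neg h]
      apply Finset.sum_eq_zero
      intro y _
      rw [if_neg]
      rintro ⟨a, ha⟩
      have := congrArg List.length ha
      simp at this; omega
  have hH : (HmatY d ℓ).mulVec v x
      = W * ((if x.1.length < ℓ then ((d:ℂ)-1) * Pseq d ℓ z Δ (x.1.length + 1) else 0) +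
             (if 0 < x.1.length then Pseq d ℓ z Δ (x.1.length - 1) else 0)) := by
    rw [Matrix.mulVec, dotProduct]
    calc ∑ y, HmatY d ℓ x y * v y
        = ∑ y : TreeBallY (d-1) ℓ,
            ((if (∃ a : Fin (d-1), y.1 = x.1 ++ [a]) then W * v y else 0) +
             (if (∃ a : Fin (d-1), x.1 = y.1 ++ [a]) then W * v y else 0)) :=
          Finset.sum_congr rfl (fun y _ => hsplit y)
      _ = W * ((∑ y : TreeBallY (d-1) ℓ, (if (∃ a : Fin (d-1), y.1 = x.1 ++ [a]) then v y else 0)) +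
               (∑ y : TreeBallY (d-1) ℓ, (if (∃ a : Fin (d-1), x.1 = y.1 ++ [a]) then v y else 0))) := by
          rw [Finset.sum_add_distrib, mul_add, Finset.mul_sum, Finset.mul_sum]
          congr 1 <;> exact Finset.sum_congr rfl (fun y _ => by rw [mul_ite, mul_zero])
      _ = _ := by rw [hC, hPa]
  rw [hH]
  -- boundary indicator via distance
  rw [distY x]
  have hrooteq : (x = rootY (d-1) ℓ) ↔ x.1.length = 0 := by
    constructor
    · rintro rfl; rfl
    · intro h
      apply Subtype.ext
      rw [List.length_eq_zero_iff.mp h]; rfl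
  -- case analysis on the depth
  rcases Nat.eq_zero_or_pos x.1.length with h0 | h0
  · -- root
    have hxr : x = rootY (d-1) ℓ := hrooteq.mpr h0
    have hvx : v x = Pseq d ℓ z Δ x.1.length := rfl
    rw [if_pos hxr, h0, hvx, h0]
    rw [if_pos (by omega : 0 < ℓ), if_neg (by omega : ¬ (0 = ℓ)), if_neg (by omega : ¬ (0 < 0))]
    have hzG : z + Gseq z Δ ℓ ≠ 0 := Gseq_add_ne hz hΔ ℓ
    have key : (z + Gseq z Δ ℓ) * (z + Gseq z Δ ℓ)⁻¹ = 1 := mul_inv_cancel₀ hzG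
    have hP1 : Pseq d ℓ z Δ (0+1) = -W * Gseq z Δ ℓ * (-(z + Gseq z Δ ℓ)⁻¹) := by
      show -W * Gseq z Δ (ℓ - 0) * Pseq d ℓ z Δ 0 = _
      rw [Nat.sub_zero]
      rfl
    have hP0 : Pseq d ℓ z Δ 0 = -(z + Gseq z Δ ℓ)⁻¹ := rfl
    rw [hP1, hP0]
    linear_combination Gseq z Δ ℓ * (z + Gseq z Δ ℓ)⁻¹ * hW2 + key
  · -- non-root
    have hnr : ¬(x = rootY (d-1) ℓ) := by rw [hrooteq]; omega
    rw [if_neg hnr]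
    obtain ⟨j, hj⟩ : ∃ j, x.1.length = j + 1 := ⟨x.1.length - 1, by omega⟩
    have hvx : v x = Pseq d ℓ z Δ x.1.length := rfl
    rw [hvx, hj]
    set Pj := Pseq d ℓ z Δ j with hPjdef
    rcases Nat.lt_or_ge (j+1) ℓ with hlt | hge
    · -- internal vertex
      rw [if_pos hlt, if_neg (by omega : ¬ (j + 1 = ℓ)), if_pos (by omega : 0 < j + 1)]
      set Gs := Gseq z Δ (ℓ - (j+1)) with hGsdef
      have hzG : z + Gs ≠ 0 := Gseq_add_ne hz hΔ _
      have key : (z + Gs) * (z + Gs)⁻¹ = 1 := mul_inv_cancel₀ hzG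
      have hrec : Gseq z Δ (ℓ - j) = -(z + Gs)⁻¹ := by
        have h' : ℓ - j = (ℓ - (j+1)) + 1 := by omega
        rw [h']
        rfl
      have hP1 : Pseq d ℓ z Δ (j+1) = W * (z + Gs)⁻¹ * Pj := by
        show -W * Gseq z Δ (ℓ - j) * Pseq d ℓ z Δ j = _
        rw [hrec, ← hPjdef]
        ring
      have hP2 : Pseq d ℓ z Δ (j+1+1) = -W * Gs * (W * (z + Gs)⁻¹ * Pj) := by
        show -W * Gseq z Δ (ℓ - (j+1)) * Pseq d ℓ z Δ (j+1) = _
        rw [hP1, ← hGsdef]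
      rw [hP2, hP1]
      simp only [Nat.add_sub_cancel, ← hPjdef]
      linear_combination (-W * Gs * (z + Gs)⁻¹ * Pj) * hW2 + (-W * Pj) * key
    · -- leaf
      have hjl : j + 1 = ℓ := by omega
      rw [if_neg (by omega : ¬ (j + 1 < ℓ)), if_pos hjl, if_pos (by omega : 0 < j + 1)]
      have hzΔ : z + Δ ≠ 0 := Gseq_add_ne hz hΔ 0
      have key : (z + Δ) * (z + Δ)⁻¹ = 1 := mul_inv_cancel₀ hzΔ
      have hP1 : Pseq d ℓ z Δ (j+1) = W * (z + Δ)⁻¹ * Pj := by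
        show -W * Gseq z Δ (ℓ - j) * Pseq d ℓ z Δ j = _
        have h1 : ℓ - j = 1 := by omega
        rw [h1, ← hPjdef]
        show -W * -(z + Gseq z Δ 0)⁻¹ * Pj = _
        show -W * -(z + Δ)⁻¹ * Pj = _
        ring
      rw [hP1]
      simp only [Nat.add_sub_cancel, ← hPjdef]
      linear_combination (-(W * Pj)) * key
end MulVec

section Invert

variable (d ℓ : ℕ) (z Δ : ℂ)

lemma Hsymm (x y : TreeBallY (d-1) ℓ) : HmatY d ℓ x y = HmatY d ℓ y x := by
  unfold HmatY
  rw [if_congr (SimpleGraph.adj_comm _ _ _) rfl rfl]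

lemma Hreal (x y : TreeBallY (d-1) ℓ) :
    (starRingEnd ℂ) (HmatY d ℓ x y) = HmatY d ℓ x y := by
  unfold HmatY
  rw [apply_ite (starRingEnd ℂ), map_zero, map_inv₀, Complex.conj_ofReal]

lemma det_ne_zero (hz : 0 < z.im) (hΔ : 0 < Δ.im) :
    (HmatY d ℓ - z • 1 - Δ • IbdY d ℓ).det ≠ 0 := by
  intro h
  obtain ⟨u, hu0, hMu⟩ := Matrix.exists_mulVec_eq_zero_iff.mpr h
  set ind : TreeBallY (d-1) ℓ → ℝ :=
    fun x => if (treeGraphY (d-1) ℓ).dist (rootY (d-1) ℓ) x = ℓ then 1 else 0 with hind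
  set U : ℝ := ∑ x : TreeBallY (d-1) ℓ, Complex.normSq (u x) with hU
  set V : ℝ := ∑ x : TreeBallY (d-1) ℓ, ind x * Complex.normSq (u x) with hV
  set T : ℂ := dotProduct (star u) ((HmatY d ℓ).mulVec u) with hT
  have hS : dotProduct (star u) ((HmatY d ℓ - z • 1 - Δ • IbdY d ℓ).mulVec u) = 0 := by
    rw [hMu, dotProduct_zero]
  have hexp : T - z * (U : ℂ) - Δ * (V : ℂ) = 0 := by
    rw [← hS, Matrix.sub_mulVec, Matrix.sub_mulVec, dotProduct_sub,
      dotProduct_sub, Matrix.smul_mulVec, Matrix.smul_mulVec,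
      Matrix.one_mulVec, dotProduct_smul, dotProduct_smul]
    congr 1
    · congr 1
      · rw [smul_eq_mul]
        congr 1
        rw [dotProduct, hU, Complex.ofReal_sum]
        apply Finset.sum_congr rfl
        intro x _
        rw [Pi.star_apply, Complex.star_def]
        rw [mul_comm]
        exact (Complex.mul_conj (u x)).symm
    · rw [smul_eq_mul]
      congr 1
      rw [dotProduct, hV, Complex.ofReal_sum]
      apply Finset.sum_congr rfl
      intro x _
      rw [Pi.star_apply, Complex.star_def, IbdY, Matrix.mulVec_diagonal, hind]
      by_cases hc : (treeGraphY (d-1) ℓ).dist (rootY (d-1) ℓ) x = ℓ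
      · simp only [hc, if_true, ite_true, if_pos, one_mul]
        rw [mul_comm]
        exact (Complex.mul_conj (u x)).symm
      · simp [hc]
  have hTim : T.im = 0 := by
    have hTsum : T = ∑ x : TreeBallY (d-1) ℓ, ∑ y : TreeBallY (d-1) ℓ,
        (starRingEnd ℂ) (u x) * HmatY d ℓ x y * u y := by
      rw [hT, dotProduct]
      apply Finset.sum_congr rfl
      intro x _
      rw [Pi.star_apply, Complex.star_def, Matrix.mulVec, dotProduct, Finset.mul_sum]
      apply Finset.sum_congr rfl
      intro y _
      ring
    have hconj : (starRingEnd ℂ) T = T := by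
      rw [hTsum, map_sum]
      rw [Finset.sum_comm]
      apply Finset.sum_congr rfl
      intro y _
      rw [map_sum]
      apply Finset.sum_congr rfl
      intro x _
      rw [map_mul, map_mul, Hreal, Complex.conj_conj, Hsymm d ℓ x y]
      ring
    exact Complex.conj_eq_iff_im.mp hconj
  have him := congrArg Complex.im hexp
  simp only [Complex.sub_im, Complex.mul_im, Complex.ofReal_re, Complex.ofReal_im,
    Complex.zero_im, hTim, mul_zero, add_zero, zero_sub] at him
  -- him : -(z.im * U) - Δ.im * V = 0  (roughly)
  have hU0 : 0 < U := by
    rw [hU]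
    obtain ⟨x0, hx0⟩ := Function.ne_iff.mp hu0
    have : 0 < Complex.normSq (u x0) := Complex.normSq_pos.mpr hx0
    exact Finset.sum_pos' (fun x _ => Complex.normSq_nonneg _) ⟨x0, Finset.mem_univ _, this⟩
  have hV0 : 0 ≤ V := by
    rw [hV]
    apply Finset.sum_nonneg
    intro x _
    rw [hind]
    by_cases hc : (treeGraphY (d-1) ℓ).dist (rootY (d-1) ℓ) x = ℓ
    · simp only [hc, if_true, ite_true, one_mul]
      exact Complex.normSq_nonneg (u x)
    · simp [hc]
  nlinarith [mul_pos hz hU0, mul_nonneg hΔ.le hV0]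

lemma entry_eq (hd : 3 ≤ d) (hℓ : 1 ≤ ℓ) (hz : 0 < z.im) (hΔ : 0 < Δ.im) :
    ((HmatY d ℓ - z • 1 - Δ • IbdY d ℓ)⁻¹) (rootY (d-1) ℓ) (rootY (d-1) ℓ)
      = Gseq z Δ (ℓ+1) := by
  set M := HmatY d ℓ - z • 1 - Δ • IbdY d ℓ with hM
  have hdet : IsUnit M.det := isUnit_iff_ne_zero.mpr (det_ne_zero d ℓ z Δ hz hΔ)
  have hmv := mulVec_eq d ℓ z Δ hd hℓ hz hΔ
  rw [← hM] at hmv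
  have h1 : M⁻¹.mulVec (M.mulVec (fun x : TreeBallY (d-1) ℓ => Pseq d ℓ z Δ x.1.length))
      = fun x => Pseq d ℓ z Δ x.1.length := by
    rw [Matrix.mulVec_mulVec, Matrix.nonsing_inv_mul _ hdet, Matrix.one_mulVec]
  rw [hmv] at h1
  have h2 := congrFun h1 (rootY (d-1) ℓ)
  rw [Matrix.mulVec, dotProduct] at h2
  simp only [mul_ite, mul_one, mul_zero] at h2
  rw [Finset.sum_ite_eq' Finset.univ (rootY (d-1) ℓ) (M⁻¹ (rootY (d-1) ℓ)),
    if_pos (Finset.mem_univ _)] at h2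
  exact h2

end Invert

section Analysis

lemma msc_ne_zero {z m : ℂ} (hroot : m^2 + z*m + 1 = 0) : m ≠ 0 := by
  intro h
  rw [h] at hroot
  simp at hroot

lemma msc_normSq_lt_one {z m : ℂ} (hz : 0 < z.im) (hm : 0 < m.im)
    (hroot : m^2 + z*m + 1 = 0) : Complex.normSq m < 1 := by
  have hm0 : m ≠ 0 := msc_ne_zero hroot
  have hN : 0 < Complex.normSq m := Complex.normSq_pos.mpr hm0
  have hzval : z = -m - m⁻¹ := by
    field_simp
    linear_combination hroot
  have h1 : 0 < -m.im + m.im / Complex.normSq m := by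
    have h2 := hz
    rw [hzval] at h2
    simp only [Complex.sub_im, Complex.neg_im, Complex.inv_im, neg_div, neg_neg,
      sub_neg_eq_add] at h2
    linarith
  have h3 : m.im / Complex.normSq m * Complex.normSq m = m.im :=
    div_mul_cancel₀ _ hN.ne'
  nlinarith [mul_pos h1 hN]

lemma msc_abs_lt_one {z m : ℂ} (hz : 0 < z.im) (hm : 0 < m.im)
    (hroot : m^2 + z*m + 1 = 0) : ‖m‖ < 1 := by
  have h := msc_normSq_lt_one hz hm hroot
  have h2 := Complex.sq_norm m
  nlinarith [norm_nonneg m]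

lemma geom_abs_le {m : ℂ} (hm : ‖m‖ ≤ 1) (k : ℕ) :
    ‖∑ j ∈ Finset.range k, (m^2)^j‖ ≤ k := by
  calc ‖∑ j ∈ Finset.range k, (m^2)^j‖
      ≤ ∑ j ∈ Finset.range k, ‖(m^2)^j‖ := norm_sum_le _ _
    _ ≤ ∑ j ∈ Finset.range k, 1 := by
        apply Finset.sum_le_sum
        intro j _
        rw [norm_pow, norm_pow]
        exact pow_le_one₀ (pow_nonneg (norm_nonneg m) 2)
          (pow_le_one₀ (norm_nonneg m) hm)
    _ = k := by simp

lemma den_ne {t : ℂ} (ht : ‖t‖ ≤ 1/2) : (1:ℂ) - t ≠ 0 ∧ (1:ℝ)/2 ≤ ‖1 - t‖ := by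
  have h1 : (1:ℝ)/2 ≤ ‖1 - t‖ := by
    have := norm_sub_norm_le (1:ℂ) t
    simp only [norm_one] at this
    linarith
  exact ⟨fun h => by rw [h] at h1; simp at h1; linarith, h1⟩

lemma Gseq_closed_form {z m u : ℂ} (hz : 0 < z.im) (hm : 0 < m.im)
    (hroot : m^2 + z*m + 1 = 0) (hΔ : 0 < (m+u).im) (n : ℕ)
    (hsmall : (n:ℝ) * ‖u‖ ≤ 1/2) :
    ∀ k, k ≤ n →
      Gseq z (m + u) k
        = m + (m^2)^k * u / (1 - m * (∑ j ∈ Finset.range k, (m^2)^j) * u) := by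
  have hm0 : m ≠ 0 := msc_ne_zero hroot
  have habs : ‖m‖ < 1 := msc_abs_lt_one hz hm hroot
  have hzval : z = (-(m^2) - 1)/m := by
    field_simp
    linear_combination hroot
  have hts : ∀ k, k ≤ n → ‖m * (∑ j ∈ Finset.range k, (m^2)^j) * u‖ ≤ 1/2 := by
    intro k hk
    rw [norm_mul, norm_mul]
    have h1 := geom_abs_le habs.le k
    have h2 : (k:ℝ) * ‖u‖ ≤ 1/2 := by
      have : (k:ℝ) ≤ (n:ℝ) := by exact_mod_cast hk
      nlinarith [norm_nonneg u]
    calc ‖m‖ * ‖∑ j ∈ Finset.range k, (m^2)^j‖ * ‖u‖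
        ≤ 1 * (k:ℝ) * ‖u‖ := by
          apply mul_le_mul_of_nonneg_right _ (norm_nonneg u)
          apply mul_le_mul habs.le h1 (norm_nonneg _) (by norm_num)
      _ ≤ 1/2 := by rw [one_mul]; exact h2
  intro k
  induction k with
  | zero =>
    intro _
    simp [Gseq]
  | succ k ih =>
    intro hk1
    have hk : k ≤ n := Nat.le_of_succ_le hk1
    have hih := ih hk
    set S : ℂ := ∑ j ∈ Finset.range k, (m^2)^j with hS
    set S' : ℂ := ∑ j ∈ Finset.range (k+1), (m^2)^j with hS'
    have hSrec : S' = S + (m^2)^k := by rw [hS', hS, Finset.sum_range_succ]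
    obtain ⟨hD, hDabs⟩ := den_ne (hts k hk)
    obtain ⟨hD', hD'abs⟩ := den_ne (hts (k+1) hk1)
    set v : ℂ := (m^2)^k * u / (1 - m * S * u) with hv
    -- |v| ≤ 1, so 1 - m*v ≠ 0
    have hvabs : ‖v‖ ≤ 1 := by
      rw [hv, norm_div, norm_mul]
      rw [div_le_one (by linarith : (0:ℝ) < ‖1 - m*S*u‖)]
      have h1 : ‖(m^2)^k‖ ≤ 1 := by
        rw [norm_pow, norm_pow]
        exact pow_le_one₀ (pow_nonneg (norm_nonneg m) 2)
          (pow_le_one₀ (norm_nonneg m) habs.le)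
      have h2 : ‖u‖ ≤ 1/2 := by
        rcases Nat.eq_zero_or_pos n with h | h
        · exfalso; omega
        · have : (1:ℝ) ≤ (n:ℝ) := by exact_mod_cast h
          nlinarith [norm_nonneg u]
      nlinarith [norm_nonneg u]
    have hmv : (1:ℂ) - m * v ≠ 0 := by
      intro h
      have h1 : ‖m * v‖ < 1 := by
        rw [norm_mul]
        nlinarith [norm_nonneg v, norm_nonneg m]
      have h2 : (1:ℂ) = m * v := by linear_combination h
      rw [← h2] at h1
      simp at h1
    -- ζ = z + m + v  is nonzero since m ζ = m v - 1
    have hζ : z + (m + v) ≠ 0 := by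
      intro h
      have h2 : m * (z + (m + v)) = m*v - 1 := by
        linear_combination hroot
      rw [h] at h2
      simp only [mul_zero] at h2
      apply hmv
      linear_combination h2
    have hstep : Gseq z (m+u) (k+1) = -(z + Gseq z (m+u) k)⁻¹ := rfl
    have hD'2 : (1:ℂ) - m * (S + (m^2)^k) * u ≠ 0 := by
      rw [← hSrec]; exact hD'
    rw [hstep, hih, hSrec]
    have hgoal : (z + (m + v)) * (m + (m^2)^(k+1) * u / (1 - m * (S + (m^2)^k) * u)) = -1 := by
      have kD : (1 - m * S * u) * (1 - m * S * u)⁻¹ = 1 := mul_inv_cancel₀ hD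
      have kD' : (1 - m * (S + (m^2)^k) * u) * (1 - m * (S + (m^2)^k) * u)⁻¹ = 1 :=
        mul_inv_cancel₀ hD'2
      rw [hv]
      linear_combination (1 + (m^2)^k * m * u * (1 - m * (S + (m^2)^k) * u)⁻¹) * hroot +
        (m^2)^k * m * u * ((1 - m * (S + (m^2)^k) * u)⁻¹ * kD - (1 - m * S * u)⁻¹ * kD')
    have hT : m + (m^2)^(k+1) * u / (1 - m * (S + (m^2)^k) * u) = (-1)/(z + (m + v)) := by
      rw [eq_div_iff hζ]
      linear_combination hgoal
    rw [hT, neg_div, one_div]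

end Analysis


end Aux

set_option maxHeartbeats 2000000 in
/-- **Quadratic expansion of `Y_ℓ(Δ,z)` around `m_sc(z)`.** Fix `d ≥ 3`. There are constants
`c, C > 0` depending only on `d` such that for all `ℓ ≥ 1`, `z ∈ ℂ` with `Im z > 0` (with
`m_sc(z)` the unique root of `m² + z m + 1 = 0` with positive imaginary part and
`m_d(z) = 1/(-z - (d/(d-1)) m_sc(z))`), and all `Δ` with `Im Δ > 0` and
`ℓ² |Δ - m_sc(z)| ≤ c`, the quantity `Y_ℓ(Δ,z) := ((H_{𝒴_ℓ} - z·I - Δ·𝕀∂)⁻¹)_{oo}`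
satisfies the expansion of Proposition `recurbound` with error `≤ C ℓ⁵ |Δ - m_sc(z)|³`. -/
theorem Y_expansion (d : ℕ) (hd : 3 ≤ d) :
    ∃ c C : ℝ, 0 < c ∧ 0 < C ∧
      ∀ (ℓ : ℕ), 1 ≤ ℓ →
      ∀ (z msc Δ : ℂ), 0 < z.im → msc ^ 2 + z * msc + 1 = 0 → 0 < msc.im → 0 < Δ.im →
        (ℓ : ℝ) ^ 2 * ‖Δ - msc‖ ≤ c →
        ‖(((HmatY d ℓ - z • 1 - Δ • IbdY d ℓ)⁻¹) (rootY (d - 1) ℓ) (rootY (d - 1) ℓ)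
              - msc
              - msc ^ (2 * ℓ + 2) * (Δ - msc)
              - msc ^ (2 * ℓ + 2) * (-z - ((d : ℂ) / ((d : ℂ) - 1)) * msc)⁻¹ *
                  ((1 - msc ^ (2 * ℓ + 2)) / ((d : ℂ) - 1) +
                    (((d : ℂ) - 2) / ((d : ℂ) - 1)) * (1 - msc ^ (2 * ℓ + 2)) /
                      (1 - msc ^ 2)) *
                  (Δ - msc) ^ 2)‖ ≤
          C * (ℓ : ℝ) ^ 5 * ‖Δ - msc‖ ^ 3 := by
  refine ⟨1/4, 8, by norm_num, by norm_num, ?_⟩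
  intro ℓ hℓ z msc Δ hz hroot hmsc hΔ hsmall
  set u : ℂ := Δ - msc with hu
  have hΔu : Δ = msc + u := by rw [hu]; ring
  set S : ℂ := ∑ j ∈ Finset.range (ℓ+1), (msc^2)^j with hS
  have hm0 : msc ≠ 0 := msc_ne_zero hroot
  have habs : ‖msc‖ < 1 := msc_abs_lt_one hz hmsc hroot
  have hℓR : (1:ℝ) ≤ (ℓ:ℝ) := by exact_mod_cast hℓ
  have hBnn : (0:ℝ) ≤ ‖u‖ := norm_nonneg u
  have hnc : ((ℓ+1 : ℕ):ℝ) = (ℓ:ℝ) + 1 := by push_cast; ring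
  have hsm : ((ℓ+1 : ℕ):ℝ) * ‖u‖ ≤ 1/2 := by
    rw [hnc]
    have h2 : (ℓ:ℝ) + 1 ≤ 2*(ℓ:ℝ)^2 := by nlinarith [hℓR]
    nlinarith [mul_le_mul_of_nonneg_right h2 hBnn, hsmall]
  have hGv := Gseq_closed_form hz hmsc hroot (by rw [← hΔu]; exact hΔ) (ℓ+1) hsm (ℓ+1) le_rfl
  rw [← hΔu, ← hS] at hGv
  have hentry := entry_eq d ℓ z Δ hd hℓ hz hΔ
  -- bound on |msc * S * u|
  have hSabs : ‖S‖ ≤ ((ℓ+1 : ℕ):ℝ) := by rw [hS]; exact geom_abs_le habs.le (ℓ+1)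
  have htabs2 : ‖msc * S * u‖ ≤ ((ℓ+1:ℕ):ℝ) * ‖u‖ := by
    rw [norm_mul, norm_mul]
    have hh : ‖msc‖ * ‖S‖ ≤ 1 * ((ℓ+1:ℕ):ℝ) :=
      mul_le_mul habs.le hSabs (norm_nonneg _) (by norm_num)
    nlinarith [norm_nonneg u]
  have htabs : ‖msc * S * u‖ ≤ 1/2 := le_trans htabs2 hsm
  obtain ⟨hD, hDabs⟩ := den_ne htabs
  -- nonzero denominators
  have hX1 : ‖(msc:ℂ)^2‖ < 1 := by
    rw [norm_pow]
    nlinarith [norm_nonneg msc]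
  have ha1 : (msc:ℂ)^2 ≠ 1 := fun h => by rw [h] at hX1; simp at hX1
  have ha1' : (msc:ℂ)^2 - 1 ≠ 0 := sub_ne_zero.mpr ha1
  have h1m : (1:ℂ) - msc^2 ≠ 0 := fun h => ha1' (by linear_combination -h)
  have hd1 : ((d:ℂ) - 1) ≠ 0 := by
    have : (d:ℂ) ≠ 1 := by
      intro h
      have : d = 1 := by exact_mod_cast h
      omega
    intro h; apply this; linear_combination h
  have hdm : (d:ℂ) - 1 - msc^2 ≠ 0 := by
    intro h
    have h2 : (msc:ℂ)^2 = (d:ℂ) - 1 := by linear_combination -h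
    have h3 : ‖(d:ℂ) - 1‖ = (d:ℝ) - 1 := by
      rw [show ((d:ℂ) - 1) = ((((d:ℝ) - 1 : ℝ)) : ℂ) by push_cast; ring, Complex.norm_of_nonneg (by
          have : (3:ℝ) ≤ (d:ℝ) := by exact_mod_cast hd
          linarith)]
    rw [h2, h3] at hX1
    have : (3:ℝ) ≤ (d:ℝ) := by exact_mod_cast hd
    linarith
  have hzval : z = (-(msc^2) - 1)/msc := by
    field_simp
    linear_combination hroot
  have hkey : -z - ((d:ℂ)/((d:ℂ)-1))*msc = ((d:ℂ) - 1 - msc^2)/(((d:ℂ)-1)*msc) := by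
    rw [hzval]
    field_simp
    ring
  have hSval : S = ((msc^2)^(ℓ+1) - 1)/(msc^2 - 1) := by rw [hS]; exact geom_sum_eq ha1 (ℓ+1)
  have hA : msc^(2*ℓ+2) = (msc^2)^(ℓ+1) := by
    rw [show 2*ℓ+2 = 2*(ℓ+1) by omega, pow_mul]
  have hcoef2 : (-z - ((d:ℂ)/((d:ℂ)-1))*msc)⁻¹ *
      ((1 - (msc^2)^(ℓ+1))/((d:ℂ)-1) +
        (((d:ℂ)-2)/((d:ℂ)-1)) * (1 - (msc^2)^(ℓ+1)) / (1 - msc^2)) = msc * S := by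
    rw [hkey, hSval, inv_div]
    field_simp
    try ring
  -- the exact error formula
  have e2 : (msc + (msc^2)^(ℓ+1) * u / (1 - msc * S * u)) - msc - (msc^2)^(ℓ+1) * u
        - (msc^2)^(ℓ+1) * (msc * S) * u^2
      = (msc^2)^(ℓ+1) * u * (msc * S * u)^2 / (1 - msc * S * u) := by
    have key : (1 - msc * S * u) * (1 - msc * S * u)⁻¹ = 1 := mul_inv_cancel₀ hD
    linear_combination ((msc^2)^(ℓ+1) * u * (1 + msc * S * u)) * key
  have hfull : ((HmatY d ℓ - z • 1 - Δ • IbdY d ℓ)⁻¹) (rootY (d - 1) ℓ) (rootY (d - 1) ℓ)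
        - msc
        - msc ^ (2 * ℓ + 2) * u
        - msc ^ (2 * ℓ + 2) * (-z - ((d : ℂ) / ((d : ℂ) - 1)) * msc)⁻¹ *
            ((1 - msc ^ (2 * ℓ + 2)) / ((d : ℂ) - 1) +
              (((d : ℂ) - 2) / ((d : ℂ) - 1)) * (1 - msc ^ (2 * ℓ + 2)) /
                (1 - msc ^ 2)) * u ^ 2
      = (msc^2)^(ℓ+1) * u * (msc * S * u)^2 / (1 - msc * S * u) := by
    rw [hentry, hGv, hA]
    linear_combination e2 - ((msc^2)^(ℓ+1) * u^2) * hcoef2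
  rw [hfull]
  -- now the absolute value bound
  have hXle : ‖(msc^2)^(ℓ+1)‖ ≤ 1 := by
    rw [norm_pow, norm_pow]
    exact pow_le_one₀ (pow_nonneg (norm_nonneg _) 2)
      (pow_le_one₀ (norm_nonneg _) habs.le)
  have hnum : ‖(msc^2)^(ℓ+1)‖ * ‖u‖ * ‖msc * S * u‖ ^ 2
      ≤ ‖u‖ * (((ℓ+1:ℕ):ℝ) * ‖u‖)^2 := by
    have h1 : ‖msc * S * u‖ ^ 2 ≤ (((ℓ+1:ℕ):ℝ) * ‖u‖)^2 := by
      apply pow_le_pow_left₀ (norm_nonneg _) htabs2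
    calc ‖(msc^2)^(ℓ+1)‖ * ‖u‖ * ‖msc * S * u‖ ^ 2
        ≤ 1 * ‖u‖ * (((ℓ+1:ℕ):ℝ) * ‖u‖)^2 := by
          apply mul_le_mul (mul_le_mul hXle le_rfl hBnn (by norm_num)) h1
            (pow_nonneg (norm_nonneg _) 2)
          positivity
      _ = ‖u‖ * (((ℓ+1:ℕ):ℝ) * ‖u‖)^2 := by ring
  calc ‖(msc^2)^(ℓ+1) * u * (msc * S * u)^2 / (1 - msc * S * u)‖
      = ‖(msc^2)^(ℓ+1)‖ * ‖u‖ * ‖msc * S * u‖ ^ 2 /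
        ‖1 - msc * S * u‖ := by
        rw [norm_div, norm_mul, norm_mul, norm_pow (msc * S * u) 2]
    _ ≤ (‖u‖ * (((ℓ+1:ℕ):ℝ) * ‖u‖)^2) / (1/2) := by
        apply div_le_div₀ (by positivity) hnum (by norm_num) hDabs
    _ ≤ 8 * (ℓ:ℝ)^5 * ‖u‖ ^ 3 := by
        rw [hnc]
        have hp : (ℓ:ℝ)^2 ≤ (ℓ:ℝ)^5 := pow_le_pow_right₀ hℓR (by norm_num)
        nlinarith [hBnn, hℓR, pow_nonneg hBnn 3, sq_nonneg ((ℓ:ℝ) - 1),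
          mul_nonneg (mul_nonneg hBnn hBnn) hBnn]
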